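/- Let f, g ∈ ℂ[X] be non-zero polynomials. Then the absolute value of their resultant satisfies |Res(f,g)| ≤ (√(deg f + 1) · H(f))^{deg g} · (√(deg g + 1) · H(g))^{deg f}, where H denotes the maximum absolute value of the coefficients. -/

import Mathlib

open Polynomial

/-- The Sylvester matrix of two polynomials `f` and `g`, of size
`(deg g + deg f) × (deg g + deg f)`: the first `deg g` rows are the shifted coefficient
vectors of `f` and the remaining `deg f` rows are the shifted coefficient vectors of `g`. -/
noncomputable def sylvesterMatrix {R : Type*} [CommRing R] (f g : Polynomial R) :
    Matrix (Fin (g.natDegree + f.natDegree)) (Fin (g.natDegree + f.natDegree)) R :=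
  fun i j =>
    if (i : ℕ) < g.natDegree then
      if (i : ℕ) ≤ (j : ℕ) ∧ (j : ℕ) ≤ (i : ℕ) + f.natDegree then
        f.coeff (f.natDegree + i - j)
      else 0
    else
      if (i : ℕ) - g.natDegree ≤ (j : ℕ) ∧ (j : ℕ) ≤ ((i : ℕ) - g.natDegree) + g.natDegree then
        g.coeff (g.natDegree + ((i : ℕ) - g.natDegree) - j)
      else 0

/-- The resultant of two polynomials, as the determinant of their Sylvester matrix. -/
noncomputable def resultant {R : Type*} [CommRing R] (f g : Polynomial R) : R :=
  (sylvesterMatrix f g).det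

/-- The height of a polynomial: the maximum of the absolute values of its coefficients. -/
noncomputable def polyHeight (f : Polynomial ℂ) : ℝ :=
  ⨆ i : ℕ, ‖f.coeff i‖

open scoped InnerProductSpace

/-- Hadamard's inequality for complex matrices. -/
lemma hadamard_complex {n : ℕ} (A : Matrix (Fin n) (Fin n) ℂ) :
    ‖A.det‖ ≤ ∏ i, Real.sqrt (∑ j, ‖A i j‖ ^ 2) := by
  classical
  haveI : WellFoundedLT (Fin n) := inferInstance
  let v : Fin n → EuclideanSpace ℂ (Fin n) := fun i => (WithLp.equiv 2 (Fin n → ℂ)).symm (A i)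
  have hcard : Module.finrank ℂ (EuclideanSpace ℂ (Fin n)) = Fintype.card (Fin n) := by
    simp
  let b : OrthonormalBasis (Fin n) ℂ (EuclideanSpace ℂ (Fin n)) :=
    InnerProductSpace.gramSchmidtOrthonormalBasis hcard v
  let e := (EuclideanSpace.basisFun (Fin n) ℂ)
  have h1 : e.toBasis.det v = A.det := by
    rw [Module.Basis.det_apply]
    have h : e.toBasis.toMatrix v = A.transpose := by
      ext i j
      simp [Module.Basis.toMatrix_apply, v, e, Matrix.transpose_apply]
    rw [h, Matrix.det_transpose]
  have h2 : e.toBasis.det v = e.toBasis.det b.toBasis * b.toBasis.det v := by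
    rw [Module.Basis.det_apply, Module.Basis.det_apply, Module.Basis.det_apply,
      ← Module.Basis.toMatrix_mul_toMatrix e.toBasis b.toBasis v, Matrix.det_mul]
  have h3 : ‖e.toBasis.det b.toBasis‖ = 1 := e.det_to_matrix_orthonormalBasis b
  have h4 : b.toBasis.det v = ∏ i, ⟪b i, v i⟫_ℂ := InnerProductSpace.gramSchmidtOrthonormalBasis_det hcard v
  rw [← h1, h2, norm_mul, h3, one_mul, h4, norm_prod]
  apply Finset.prod_le_prod (fun i _ => norm_nonneg _)
  intro i _
  calc ‖⟪b i, v i⟫_ℂ‖ ≤ ‖b i‖ * ‖v i‖ := norm_inner_le_norm _ _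
    _ = ‖v i‖ := by rw [b.orthonormal.1 i, one_mul]
    _ = Real.sqrt (∑ j, ‖A i j‖ ^ 2) := by
        rw [EuclideanSpace.norm_eq]
        simp [v]

lemma coeff_le_polyHeight (f : Polynomial ℂ) (k : ℕ) :
    ‖f.coeff k‖ ≤ polyHeight f := by
  classical
  have hb : BddAbove (Set.range fun i => ‖f.coeff i‖) := by
    apply BddAbove.mono ?_
      (((f.support.finite_toSet.image fun i => ‖f.coeff i‖)).insert 0).bddAbove
    rintro x ⟨i, rfl⟩
    by_cases hi : i ∈ f.support
    · exact Set.mem_insert_of_mem _ ⟨i, hi, rfl⟩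
    · simp only [Polynomial.notMem_support_iff.mp hi, norm_zero]
      exact Set.mem_insert _ _
  exact le_ciSup hb k

lemma polyHeight_nonneg (f : Polynomial ℂ) : 0 ≤ polyHeight f :=
  (norm_nonneg _).trans (coeff_le_polyHeight f 0)

lemma row_norm_bound {N : ℕ} (r : Fin N → ℂ) (a m : ℕ) (H : ℝ) (hH : 0 ≤ H)
    (hsupp : ∀ j : Fin N, r j ≠ 0 → a ≤ (j : ℕ) ∧ (j : ℕ) ≤ a + m)
    (hbd : ∀ j, ‖r j‖ ≤ H) :
    Real.sqrt (∑ j, ‖r j‖ ^ 2) ≤ Real.sqrt ((m : ℝ) + 1) * H := by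
  classical
  have h1 : ∑ j, ‖r j‖ ^ 2 ≤ ((m : ℝ) + 1) * H ^ 2 := by
    have hcard : (Finset.univ.filter fun j : Fin N =>
        a ≤ (j : ℕ) ∧ (j : ℕ) ≤ a + m).card ≤ m + 1 := by
      have h := Finset.card_le_card_of_injOn (fun j : Fin N => (j : ℕ))
        (s := Finset.univ.filter fun j : Fin N => a ≤ (j : ℕ) ∧ (j : ℕ) ≤ a + m)
        (t := Finset.Icc a (a + m))
        (fun j hj => by
          simp only [Finset.coe_filter, Finset.mem_univ, true_and, Set.mem_setOf_eq] at hj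
          exact Finset.mem_Icc.mpr hj)
        (fun x _ y _ h => Fin.val_injective h)
      rw [Nat.card_Icc] at h
      omega
    calc ∑ j, ‖r j‖ ^ 2
        ≤ ∑ j : Fin N, (if a ≤ (j : ℕ) ∧ (j : ℕ) ≤ a + m then H ^ 2 else 0) := by
          apply Finset.sum_le_sum
          intro j _
          by_cases hP : a ≤ (j : ℕ) ∧ (j : ℕ) ≤ a + m
          · rw [if_pos hP]
            exact pow_le_pow_left₀ (norm_nonneg _) (hbd j) 2
          · rw [if_neg hP, not_not.mp (mt (hsupp j) hP)]
            simp
      _ = ((Finset.univ.filter fun j : Fin N =>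
            a ≤ (j : ℕ) ∧ (j : ℕ) ≤ a + m).card : ℝ) * H ^ 2 := by
          rw [Finset.sum_ite, Finset.sum_const, Finset.sum_const_zero, add_zero, nsmul_eq_mul]
      _ ≤ ((m : ℝ) + 1) * H ^ 2 := by
          apply mul_le_mul_of_nonneg_right _ (by positivity)
          exact_mod_cast hcard
  calc Real.sqrt (∑ j, ‖r j‖ ^ 2) ≤ Real.sqrt (((m : ℝ) + 1) * H ^ 2) :=
        Real.sqrt_le_sqrt h1
    _ = Real.sqrt ((m : ℝ) + 1) * H := by
        rw [Real.sqrt_mul (by positivity), Real.sqrt_sq hH]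

lemma card_filter_fin_lt (n m : ℕ) :
    (Finset.univ.filter fun i : Fin (n + m) => (i : ℕ) < n).card = n := by
  have h : (Finset.univ.filter fun i : Fin (n + m) => (i : ℕ) < n) =
      Finset.map (Fin.castAddEmb m) Finset.univ := by
    ext i
    simp only [Finset.mem_filter, Finset.mem_univ, true_and, Finset.mem_map]
    constructor
    · intro hi; exact ⟨⟨i, hi⟩, by simp [Fin.castAddEmb, Fin.ext_iff]⟩
    · rintro ⟨j, rfl⟩; simp [Fin.castAddEmb]
  rw [h, Finset.card_map, Finset.card_univ, Fintype.card_fin]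

theorem stmt_2 (f g : Polynomial ℂ) (hf : f ≠ 0) (hg : g ≠ 0) :
    ‖_root_.resultant f g‖ ≤
      (Real.sqrt ((f.natDegree : ℝ) + 1) * polyHeight f) ^ g.natDegree *
        (Real.sqrt ((g.natDegree : ℝ) + 1) * polyHeight g) ^ f.natDegree := by
  classical
  set n := g.natDegree with hn
  set m := f.natDegree with hm
  set X := Real.sqrt ((m : ℝ) + 1) * polyHeight f with hX
  set Y := Real.sqrt ((n : ℝ) + 1) * polyHeight g with hY
  have key := hadamard_complex (sylvesterMatrix f g)
  refine key.trans ?_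
  have hrow : ∀ i : Fin (n + m),
      Real.sqrt (∑ j, ‖sylvesterMatrix f g i j‖ ^ 2) ≤
        if (i : ℕ) < n then X else Y := by
    intro i
    by_cases hi : (i : ℕ) < n
    · rw [if_pos hi]
      apply row_norm_bound _ (i : ℕ) m _ (polyHeight_nonneg f)
      · intro j hj
        by_contra hc
        apply hj
        simp only [sylvesterMatrix, if_pos (show (i : ℕ) < g.natDegree from hi)]
        exact if_neg hc
      · intro j
        simp only [sylvesterMatrix, if_pos (show (i : ℕ) < g.natDegree from hi)]
        split
        · exact coeff_le_polyHeight f _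
        · simp only [norm_zero]
          exact polyHeight_nonneg f
    · rw [if_neg hi]
      apply row_norm_bound _ ((i : ℕ) - n) n _ (polyHeight_nonneg g)
      · intro j hj
        by_contra hc
        apply hj
        simp only [sylvesterMatrix, if_neg (show ¬ (i : ℕ) < g.natDegree from hi)]
        exact if_neg hc
      · intro j
        simp only [sylvesterMatrix, if_neg (show ¬ (i : ℕ) < g.natDegree from hi)]
        split
        · exact coeff_le_polyHeight g _
        · simp only [norm_zero]
          exact polyHeight_nonneg g
  calc ∏ i, Real.sqrt (∑ j, ‖sylvesterMatrix f g i j‖ ^ 2)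
      ≤ ∏ i : Fin (n + m), (if (i : ℕ) < n then X else Y) :=
        Finset.prod_le_prod (fun i _ => Real.sqrt_nonneg _) (fun i _ => hrow i)
    _ = X ^ n * Y ^ m := by
        rw [Finset.prod_ite, Finset.prod_const, Finset.prod_const, card_filter_fin_lt]
        congr 2
        have h := Finset.card_filter_add_card_filter_not
          (s := (Finset.univ : Finset (Fin (n + m)))) (fun i : Fin (n + m) => (i : ℕ) < n)
        rw [card_filter_fin_lt, Finset.card_univ, Fintype.card_fin] at h
        omega
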